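/- Let V, W : [0,T] × Σ → ℝ satisfy the integrated HJB equations V(t,x) = ψ(x,m(T)) + ∫_t^T H*(s,x,m(s),V(s,·)) ds and W(t,x) = ψ(x,n(T)) + ∫_t^T H*(s,x,n(s),W(s,·)) ds, where H*(s,x,p,g) = min_{a∈A} H(s,x,a,p,g) and H satisfies |H*(t,x,p,g) − H*(t,x,q,h)| ≤ C₄|p−q| + C₅ max_y|g_y − h_y| for constants C₄, C₅. Then for all t ∈ [0,T]: max_x |V(t,x) − W(t,x)| ≤ (K₂ + T C₄) e^{C₅ T} · sup_{s∈[0,T]} |m(s) − n(s)|, where K₂ is the Lipschitz constant of ψ in its measure argument. -/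

import Mathlib

open MeasureTheory

/-- Euclidean distance on `ℝ^d` written explicitly. -/
noncomputable def eudistFn {d : ℕ} (p q : Fin d → ℝ) : ℝ :=
  Real.sqrt (∑ j, (p j - q j) ^ 2)

lemma eudistFn_nonneg {d : ℕ} (p q : Fin d → ℝ) : 0 ≤ eudistFn p q :=
  Real.sqrt_nonneg _

lemma eudistFn_le_sqrt {d : ℕ} {p q : Fin d → ℝ}
    (hp : p ∈ stdSimplex ℝ (Fin d)) (hq : q ∈ stdSimplex ℝ (Fin d)) :
    eudistFn p q ≤ Real.sqrt d := by
  apply Real.sqrt_le_sqrt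
  calc ∑ j, (p j - q j) ^ 2 ≤ ∑ _j : Fin d, (1 : ℝ) := by
        refine Finset.sum_le_sum fun j _ => ?_
        have hp1 : p j ≤ 1 := by
          rw [← hp.2]
          exact Finset.single_le_sum (fun i _ => hp.1 i) (Finset.mem_univ j)
        have hq1 : q j ≤ 1 := by
          rw [← hq.2]
          exact Finset.single_le_sum (fun i _ => hq.1 i) (Finset.mem_univ j)
        have h0p := hp.1 j
        have h0q := hq.1 j
        nlinarith
    _ = (d : ℝ) := by simp

/-- Stability of the value function with respect to the flow of measures: if `V, W` solve the
integrated HJB equations associated with flows `m, n` and the minimized Hamiltonian `H*` is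
Lipschitz in `(p,g)` with constants `C₄, C₅`, then
`max_x |V(t,x) − W(t,x)| ≤ (K₂ + T C₄) e^{C₅ T} ‖m − n‖_∞`. -/
theorem stmt_15 (d : ℕ) (T K₂ C₄ C₅ : ℝ)
    (hT : 0 ≤ T) (hK₂ : 0 ≤ K₂) (hC₄ : 0 ≤ C₄) (hC₅ : 0 ≤ C₅)
    (ψ : Fin d → (Fin d → ℝ) → ℝ)
    (hψ : ∀ x p q, |ψ x p - ψ x q| ≤ K₂ * eudistFn p q)
    (Hstar : ℝ → Fin d → (Fin d → ℝ) → (Fin d → ℝ) → ℝ)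
    (hH : ∀ t ∈ Set.Icc (0:ℝ) T, ∀ (x : Fin d) (p q g h : Fin d → ℝ),
      |Hstar t x p g - Hstar t x q h| ≤ C₄ * eudistFn p q + C₅ * ⨆ y : Fin d, |g y - h y|)
    (m n : ℝ → Fin d → ℝ)
    (hm : ∀ s ∈ Set.Icc (0:ℝ) T, m s ∈ stdSimplex ℝ (Fin d))
    (hn : ∀ s ∈ Set.Icc (0:ℝ) T, n s ∈ stdSimplex ℝ (Fin d))
    (V W : ℝ → Fin d → ℝ)
    (hVint : ∀ x : Fin d, IntegrableOn (fun s => Hstar s x (m s) (V s)) (Set.Icc (0:ℝ) T))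
    (hWint : ∀ x : Fin d, IntegrableOn (fun s => Hstar s x (n s) (W s)) (Set.Icc (0:ℝ) T))
    (hV : ∀ t ∈ Set.Icc (0:ℝ) T, ∀ x : Fin d,
      V t x = ψ x (m T) + ∫ s in Set.Ioc t T, Hstar s x (m s) (V s))
    (hW : ∀ t ∈ Set.Icc (0:ℝ) T, ∀ x : Fin d,
      W t x = ψ x (n T) + ∫ s in Set.Ioc t T, Hstar s x (n s) (W s)) :
    ∀ t ∈ Set.Icc (0:ℝ) T, ∀ x : Fin d,
      |V t x - W t x| ≤ (K₂ + T * C₄) * Real.exp (C₅ * T) *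
        ⨆ s : Set.Icc (0:ℝ) T, eudistFn (m s) (n s) := by
  intro t ht x
  haveI hne : Nonempty (Fin d) := ⟨x⟩
  haveI : Nonempty (Set.Icc (0:ℝ) T) := ⟨⟨0, le_refl 0, hT⟩⟩
  -- the sup distance D
  have hbddD : BddAbove (Set.range fun s : Set.Icc (0:ℝ) T => eudistFn (m s) (n s)) := by
    refine ⟨Real.sqrt d, ?_⟩
    rintro _ ⟨s, rfl⟩
    exact eudistFn_le_sqrt (hm s s.2) (hn s s.2)
  set D := ⨆ s : Set.Icc (0:ℝ) T, eudistFn (m s) (n s) with hDdef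
  have hDle : ∀ s ∈ Set.Icc (0:ℝ) T, eudistFn (m s) (n s) ≤ D :=
    fun s hs => le_ciSup hbddD (⟨s, hs⟩ : Set.Icc (0:ℝ) T)
  have hD0 : 0 ≤ D := le_trans (eudistFn_nonneg _ _) (hDle 0 ⟨le_refl 0, hT⟩)
  set A := (K₂ + T * C₄) * D with hAdef
  have hA0 : 0 ≤ A := mul_nonneg (by positivity) hD0
  -- the sup gap φ
  set φ : ℝ → ℝ := fun s => ⨆ y : Fin d, |V s y - W s y| with hφdef
  have hφbdd : ∀ s, BddAbove (Set.range fun y : Fin d => |V s y - W s y|) :=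
    fun s => Set.Finite.bddAbove (Set.finite_range _)
  have hφy : ∀ s (y : Fin d), |V s y - W s y| ≤ φ s := fun s y => le_ciSup (hφbdd s) y
  have hφ0 : ∀ s, 0 ≤ φ s := fun s => le_trans (abs_nonneg _) (hφy s x)
  -- integrability of the Hamiltonian terms on subintervals
  have hsub : ∀ a b : ℝ, 0 ≤ a → b ≤ T → Set.Ioc a b ⊆ Set.Icc (0:ℝ) T := by
    intro a b ha hb u hu
    exact ⟨le_of_lt (lt_of_le_of_lt ha hu.1), le_trans hu.2 hb⟩
  have hVi : ∀ (y : Fin d) (a b : ℝ), 0 ≤ a → b ≤ T →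
      IntegrableOn (fun s => Hstar s y (m s) (V s)) (Set.Ioc a b) :=
    fun y a b ha hb => (hVint y).mono_set (hsub a b ha hb)
  have hWi : ∀ (y : Fin d) (a b : ℝ), 0 ≤ a → b ≤ T →
      IntegrableOn (fun s => Hstar s y (n s) (W s)) (Set.Ioc a b) :=
    fun y a b ha hb => (hWint y).mono_set (hsub a b ha hb)
  -- splitting of the integral
  have hsplit : ∀ (f : ℝ → ℝ), IntegrableOn f (Set.Icc (0:ℝ) T) → ∀ t' ∈ Set.Icc (0:ℝ) T,
      (∫ s in Set.Ioc t' T, f s) =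
        (∫ s in Set.Ioc (0:ℝ) T, f s) - ∫ s in Set.Ioc (0:ℝ) t', f s := by
    intro f hf t' ht'
    have h1 : IntegrableOn f (Set.Ioc (0:ℝ) t') :=
      hf.mono_set (fun u hu => ⟨le_of_lt hu.1, le_trans hu.2 ht'.2⟩)
    have h2 : IntegrableOn f (Set.Ioc t' T) :=
      hf.mono_set (hsub t' T ht'.1 le_rfl)
    have h3 := setIntegral_union (Set.Ioc_disjoint_Ioc_of_le le_rfl) measurableSet_Ioc h1 h2
    rw [Set.Ioc_union_Ioc_eq_Ioc ht'.1 ht'.2] at h3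
    linarith
  -- continuity of the gap
  have hVW_cont : ∀ y : Fin d, ContinuousOn (fun s => V s y - W s y) (Set.Icc (0:ℝ) T) := by
    intro y
    have h1 : ContinuousOn (fun u => ∫ s in Set.Ioc (0:ℝ) u, Hstar s y (m s) (V s))
        (Set.Icc (0:ℝ) T) := intervalIntegral.continuousOn_primitive (hVint y)
    have h2 : ContinuousOn (fun u => ∫ s in Set.Ioc (0:ℝ) u, Hstar s y (n s) (W s))
        (Set.Icc (0:ℝ) T) := intervalIntegral.continuousOn_primitive (hWint y)
    have hcont : ContinuousOn (fun u =>
        (ψ y (m T) + ((∫ s in Set.Ioc (0:ℝ) T, Hstar s y (m s) (V s)) -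
          ∫ s in Set.Ioc (0:ℝ) u, Hstar s y (m s) (V s))) -
        (ψ y (n T) + ((∫ s in Set.Ioc (0:ℝ) T, Hstar s y (n s) (W s)) -
          ∫ s in Set.Ioc (0:ℝ) u, Hstar s y (n s) (W s)))) (Set.Icc (0:ℝ) T) :=
      (continuousOn_const.add (continuousOn_const.sub h1)).sub
        (continuousOn_const.add (continuousOn_const.sub h2))
    refine ContinuousOn.congr hcont ?_
    intro u hu
    show V u y - W u y = _
    rw [hV u hu y, hW u hu y, hsplit _ (hVint y) u hu, hsplit _ (hWint y) u hu]
  have hφcont : ContinuousOn φ (Set.Icc (0:ℝ) T) := by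
    have hc : ContinuousOn (fun u => Finset.univ.sup' Finset.univ_nonempty
        (fun y : Fin d => |V u y - W u y|)) (Set.Icc (0:ℝ) T) :=
      ContinuousOn.finset_sup'_apply _ (fun y _ => (hVW_cont y).abs)
    refine ContinuousOn.congr hc ?_
    intro u _
    rw [hφdef]
    exact (Finset.sup'_univ_eq_ciSup _).symm
  have hφIcc : IntegrableOn φ (Set.Icc (0:ℝ) T) := hφcont.integrableOn_Icc
  have hφIoc : ∀ a : ℝ, 0 ≤ a → IntegrableOn φ (Set.Ioc a T) :=
    fun a ha => hφIcc.mono_set (hsub a T ha le_rfl)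
  -- the key integral inequality
  have hkey : ∀ t' ∈ Set.Icc (0:ℝ) T, φ t' ≤ A + C₅ * ∫ s in Set.Ioc t' T, φ s := by
    intro t' ht'
    rw [hφdef]
    refine ciSup_le fun y => ?_
    have hintV := hVi y t' T ht'.1 le_rfl
    have hintW := hWi y t' T ht'.1 le_rfl
    have hdiff : V t' y - W t' y = (ψ y (m T) - ψ y (n T))
        + ∫ s in Set.Ioc t' T, (Hstar s y (m s) (V s) - Hstar s y (n s) (W s)) := by
      rw [hV t' ht' y, hW t' ht' y, integral_sub hintV hintW]; ring
    have h1 : |ψ y (m T) - ψ y (n T)| ≤ K₂ * D :=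
      le_trans (hψ y _ _) (mul_le_mul_of_nonneg_left (hDle T ⟨hT, le_rfl⟩) hK₂)
    have hbound : ∀ s ∈ Set.Ioc t' T, |Hstar s y (m s) (V s) - Hstar s y (n s) (W s)|
        ≤ C₄ * D + C₅ * φ s := by
      intro s hs
      have hsIcc : s ∈ Set.Icc (0:ℝ) T := hsub t' T ht'.1 le_rfl hs
      refine le_trans (hH s hsIcc y (m s) (n s) (V s) (W s)) ?_
      have heq : (⨆ z : Fin d, |V s z - W s z|) = φ s := by rw [hφdef]
      rw [heq]
      exact add_le_add (mul_le_mul_of_nonneg_left (hDle s hsIcc) hC₄) le_rfl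
    have hconst : IntegrableOn (fun _ : ℝ => C₄ * D) (Set.Ioc t' T) :=
      integrableOn_const measure_Ioc_lt_top.ne
    have hint2 : IntegrableOn (fun s => C₄ * D + C₅ * φ s) (Set.Ioc t' T) :=
      hconst.add ((hφIoc t' ht'.1).const_mul C₅)
    have h2 : |∫ s in Set.Ioc t' T, (Hstar s y (m s) (V s) - Hstar s y (n s) (W s))|
        ≤ ∫ s in Set.Ioc t' T, (C₄ * D + C₅ * φ s) := by
      rw [← Real.norm_eq_abs]
      refine le_trans (norm_integral_le_integral_norm _) ?_
      refine setIntegral_mono_on ((hintV.sub hintW).norm) hint2 measurableSet_Ioc ?_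
      intro s hs
      simpa [Real.norm_eq_abs] using hbound s hs
    have h3 : (∫ s in Set.Ioc t' T, (C₄ * D + C₅ * φ s))
        = C₄ * D * (T - t') + C₅ * ∫ s in Set.Ioc t' T, φ s := by
      rw [integral_add hconst ((hφIoc t' ht'.1).const_mul C₅), setIntegral_const,
        measureReal_def, Real.volume_Ioc, smul_eq_mul, ENNReal.toReal_ofReal (sub_nonneg.2 ht'.2),
        integral_const_mul]
      ring
    have h4 : C₄ * D * (T - t') ≤ C₄ * D * T := by nlinarith [ht'.1, mul_nonneg hC₄ hD0]
    calc |V t' y - W t' y|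
        ≤ |ψ y (m T) - ψ y (n T)|
          + |∫ s in Set.Ioc t' T, (Hstar s y (m s) (V s) - Hstar s y (n s) (W s))| := by
          rw [hdiff]; exact abs_add_le _ _
      _ ≤ K₂ * D + (C₄ * D * (T - t') + C₅ * ∫ s in Set.Ioc t' T, φ s) :=
          add_le_add h1 (h3 ▸ h2)
      _ ≤ A + C₅ * ∫ s in Set.Ioc t' T, φ s := by rw [hAdef]; nlinarith [h4]
  -- continuous extension of φ to all of ℝ
  set φc : ℝ → ℝ := Set.IccExtend hT (fun s : Set.Icc (0:ℝ) T => φ s) with hφcdef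
  have hφc_eq : ∀ s ∈ Set.Icc (0:ℝ) T, φc s = φ s :=
    fun s hs => Set.IccExtend_of_mem hT _ hs
  have hφc_cont : Continuous φc := hφcont.restrict.Icc_extend'
  have hφc0 : ∀ s, 0 ≤ φc s := fun s => hφ0 _
  -- the integral of φ as a function of the left endpoint, time-reversed
  set G : ℝ → ℝ := fun u => ∫ s in (T - u)..T, φc s with hGdef
  have hG_deriv : ∀ u : ℝ, HasDerivAt G (φc (T - u)) u := by
    intro u
    have h1 : HasDerivAt (fun v => ∫ s in v..T, φc s) (-φc (T - u)) (T - u) :=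
      intervalIntegral.integral_hasDerivAt_left (hφc_cont.intervalIntegrable _ _)
        (hφc_cont.stronglyMeasurableAtFilter _ _) hφc_cont.continuousAt
    have h2 : HasDerivAt (fun v : ℝ => T - v) (-1) u := (hasDerivAt_id u).const_sub T
    have h3 := h1.comp u h2
    have h4 : HasDerivAt G (-φc (T - u) * -1) u := h3
    simpa using h4
  have hG_eq : ∀ u ∈ Set.Icc (0:ℝ) T, G u = ∫ s in Set.Ioc (T - u) T, φ s := by
    intro u hu
    show (∫ s in (T - u)..T, φc s) = _
    rw [intervalIntegral.integral_of_le (by linarith [hu.1] : T - u ≤ T)]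
    refine setIntegral_congr_fun measurableSet_Ioc ?_
    intro s hs
    exact hφc_eq s ⟨by linarith [hs.1, hu.2], hs.2⟩
  have hG0 : ∀ u ∈ Set.Icc (0:ℝ) T, 0 ≤ G u := by
    intro u hu
    rw [hG_eq u hu]
    exact setIntegral_nonneg measurableSet_Ioc fun s _ => hφ0 s
  -- Gronwall
  have hmain : ∀ u ∈ Set.Icc (0:ℝ) T, ‖G u‖ ≤ gronwallBound 0 C₅ A u := by
    intro u hu
    have h := norm_le_gronwallBound_of_norm_deriv_right_le (f := G)
      (f' := fun u => φc (T - u)) (δ := 0) (K := C₅) (ε := A) (a := 0) (b := T)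
      (fun v _ => (hG_deriv v).continuousAt.continuousWithinAt)
      (fun v _ => (hG_deriv v).hasDerivWithinAt)
      (by simp [hGdef])
      ?_ u hu
    · simpa using h
    · intro v hv
      have hvIcc : v ∈ Set.Icc (0:ℝ) T := ⟨hv.1, le_of_lt hv.2⟩
      have hTv : T - v ∈ Set.Icc (0:ℝ) T := ⟨by linarith [hv.2], by linarith [hv.1]⟩
      rw [Real.norm_eq_abs, Real.norm_eq_abs, abs_of_nonneg (hφc0 _),
        abs_of_nonneg (hG0 v hvIcc), hφc_eq _ hTv]
      have hk := hkey (T - v) hTv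
      rw [← hG_eq v hvIcc] at hk
      linarith
  -- conclusion
  have hu : T - t ∈ Set.Icc (0:ℝ) T := ⟨by linarith [ht.2], by linarith [ht.1]⟩
  have h2 := hmain (T - t) hu
  rw [Real.norm_eq_abs, abs_of_nonneg (hG0 _ hu)] at h2
  have h3 : G (T - t) = ∫ s in Set.Ioc t T, φ s := by
    rw [hG_eq (T - t) hu, sub_sub_cancel]
  have h1 := hkey t ht
  rw [← h3] at h1
  have hfin : φ t ≤ A * Real.exp (C₅ * T) := by
    have h5 : C₅ * G (T - t) ≤ C₅ * gronwallBound 0 C₅ A (T - t) :=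
      mul_le_mul_of_nonneg_left h2 hC₅
    have hexp : Real.exp (C₅ * (T - t)) ≤ Real.exp (C₅ * T) :=
      Real.exp_le_exp.2 (by nlinarith [ht.1])
    rcases eq_or_lt_of_le hC₅ with hC | hC
    · subst hC
      rw [zero_mul, Real.exp_zero, mul_one]
      rw [zero_mul, add_zero] at h1
      exact h1
    · have hgb : gronwallBound 0 C₅ A (T - t) = A / C₅ * (Real.exp (C₅ * (T - t)) - 1) := by
        rw [gronwallBound_of_K_ne_0 (ne_of_gt hC)]
        simp
      have heq : A + C₅ * (A / C₅ * (Real.exp (C₅ * (T - t)) - 1))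
          = A * Real.exp (C₅ * (T - t)) := by
        field_simp
        ring
      have hle : A * Real.exp (C₅ * (T - t)) ≤ A * Real.exp (C₅ * T) :=
        mul_le_mul_of_nonneg_left hexp hA0
      rw [hgb] at h5
      linarith
  calc |V t x - W t x| ≤ φ t := hφy t x
    _ ≤ A * Real.exp (C₅ * T) := hfin
    _ = (K₂ + T * C₄) * Real.exp (C₅ * T) * D := by rw [hAdef]; ring
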